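/- For every natural number q ≥ 1 and every integer k, the quantity h_k = -2 · ∑_{i=1}^{2q+1} 2i · C(4q+2, 2i) · k^(2i-1) is divisible by 8. -/

import Mathlib

open Finset

lemma pair_sum (f : ℕ → ℕ) (m : ℕ) :
    ∑ i ∈ Icc 1 m, (f (2*i-2) + f (2*i-1)) = ∑ j ∈ range (2*m), f j := by
  induction m with
  | zero => simp
  | succ m ih =>
      rw [Finset.sum_Icc_succ_top (by omega), ih]
      have : 2 * (m+1) = 2*m + 1 + 1 := by ring
      rw [this, Finset.sum_range_succ, Finset.sum_range_succ]
      have h3 : 2*m + 1 + 1 - 2 = 2*m := by omega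
      have h4 : 2*m + 1 + 1 - 1 = 2*m+1 := by omega
      rw [h3, h4]; ring

lemma even_eq_odd (q : ℕ) :
    ∑ i ∈ Icc 1 (2*q+1), Nat.choose (4*q+1) (2*i-2)
      = ∑ i ∈ Icc 1 (2*q+1), Nat.choose (4*q+1) (2*i-1) := by
  apply Finset.sum_nbij' (fun i => 2*q+2-i) (fun i => 2*q+2-i)
  · intro i hi; simp only [mem_Icc] at *; omega
  · intro i hi; simp only [mem_Icc] at *; omega
  · intro i hi; simp only [mem_Icc] at hi; omega
  · intro i hi; simp only [mem_Icc] at hi; omega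
  · intro i hi; simp only [mem_Icc] at hi
    have h1 : 2*(2*q+2-i)-1 = (4*q+1) - (2*i-2) := by omega
    rw [h1, Nat.choose_symm (by omega)]

lemma odd_sum (q : ℕ) :
    2 * ∑ i ∈ Icc 1 (2*q+1), Nat.choose (4*q+1) (2*i-1) = 2^(4*q+1) := by
  have h := pair_sum (Nat.choose (4*q+1)) (2*q+1)
  rw [Finset.sum_add_distrib, even_eq_odd] at h
  have h2 : 2*(2*q+1) = 4*q+1+1 := by ring
  rw [h2, Nat.sum_range_choose] at h
  omega

theorem eight_dvd_hk (q : ℕ) (hq : 1 ≤ q) (k : ℤ) :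
    (8 : ℤ) ∣ -2 * ∑ i ∈ Finset.Icc 1 (2 * q + 1),
      2 * (i : ℤ) * (Nat.choose (4 * q + 2) (2 * i) : ℤ) * k ^ (2 * i - 1) := by
  have hterm : ∀ i ∈ Icc 1 (2*q+1),
      2 * (i : ℤ) * (Nat.choose (4 * q + 2) (2 * i) : ℤ) * k ^ (2 * i - 1)
        = 2 * (2*q+1 : ℤ) * ((Nat.choose (4*q+1) (2*i-1) : ℤ) * k ^ (2*i-1)) := by
    intro i hi
    simp only [mem_Icc] at hi
    have hnat : (4*q+2) * Nat.choose (4*q+1) (2*i-1)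
        = Nat.choose (4*q+2) (2*i) * (2*i) := by
      have h := Nat.add_one_mul_choose_eq (4*q+1) (2*i-1)
      have h2 : 2*i-1+1 = 2*i := by omega
      simp only [Nat.succ_eq_add_one, h2] at h
      have h3 : 4*q+1+1 = 4*q+2 := by omega
      rw [h3] at h
      exact h
    have hz : ((4*q+2 : ℕ) : ℤ) * (Nat.choose (4*q+1) (2*i-1) : ℤ)
        = (Nat.choose (4*q+2) (2*i) : ℤ) * ((2*i : ℕ) : ℤ) := by exact_mod_cast hnat
    push_cast at hz
    linear_combination (-(k ^ (2*i-1))) * hz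
  rw [Finset.sum_congr rfl hterm, ← Finset.mul_sum]
  set T := ∑ i ∈ Icc 1 (2*q+1), ((Nat.choose (4*q+1) (2*i-1) : ℤ) * k ^ (2*i-1)) with hT
  have hTeven : (2 : ℤ) ∣ T := by
    have hBnat : 2 ∣ ∑ i ∈ Icc 1 (2*q+1), Nat.choose (4*q+1) (2*i-1) := by
      have h := odd_sum q
      have hp : (2:ℕ)^(4*q+1) = 2 * 2^(4*q) := by rw [pow_succ]; ring
      have hB' : ∑ i ∈ Icc 1 (2*q+1), Nat.choose (4*q+1) (2*i-1) = 2^(4*q) := by omega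
      rw [hB']
      exact dvd_pow_self 2 (by omega)
    have hB : (2 : ℤ) ∣ (∑ i ∈ Icc 1 (2*q+1), (Nat.choose (4*q+1) (2*i-1) : ℤ)) := by
      obtain ⟨c, hc⟩ := hBnat
      refine ⟨(c : ℤ), ?_⟩
      exact_mod_cast congrArg (Nat.cast : ℕ → ℤ) hc
    have hsplit : T = k * (∑ i ∈ Icc 1 (2*q+1), (Nat.choose (4*q+1) (2*i-1) : ℤ))
        + ∑ i ∈ Icc 1 (2*q+1), (Nat.choose (4*q+1) (2*i-1) : ℤ) * (k ^ (2*i-1) - k) := by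
      rw [Finset.mul_sum, ← Finset.sum_add_distrib]
      apply Finset.sum_congr rfl; intro i hi; ring
    rw [hsplit]
    apply dvd_add
    · exact Dvd.dvd.mul_left hB k
    · apply Finset.dvd_sum
      intro i hi
      simp only [mem_Icc] at hi
      apply Dvd.dvd.mul_left
      have hev : Even (k ^ (2*i-1) - k) := by
        rw [Int.even_sub, Int.even_pow]
        constructor
        · rintro ⟨h, _⟩; exact h
        · intro h; exact ⟨h, by omega⟩
      obtain ⟨r, hr⟩ := hev
      exact ⟨r, by omega⟩
  obtain ⟨t, ht⟩ := hTeven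
  rw [ht]
  exact ⟨-((2*q+1) * t), by ring⟩
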